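/- Let N ≥ 1, γ' > 1 and 0 < α < N − γ'. Suppose m, w : ℝ^N → ℝ with m ≥ 0, ∫ m = M > 0, the kinetic energy K := ∫_{m>0} m |w/m|^{γ'} dx is finite, the potential term ∫ V m dx is finite for V with 0 ≤ V(x) ≤ C_V(1+|x|)^b, and the Riesz energy R := ∬ m(x)m(y)|x−y|^{α−N} dx dy is strictly positive. Then, with m_σ(x) := σ^{-N} m(x/σ) and w_σ(x) := σ^{-N-1} w(x/σ), the energy E(m_σ, w_σ) = σ^{-γ'}K/γ' + ∫ V(σ x) m(x) dx − (σ^{α−N}/2) R tends to −∞ as σ → 0⁺. -/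
import Mathlib


open MeasureTheory Real Filter Topology

noncomputable section

abbrev Euc (N : ℕ) := EuclideanSpace ℝ (Fin N)

theorem stmt_1 (N : ℕ) (hN : 1 ≤ N) (γ' α b C_V M K R : ℝ)
    (hγ' : 1 < γ') (hα : 0 < α) (hαsub : α < (N : ℝ) - γ')
    (hb : 0 < b) (hCV : 0 < C_V)
    (m w V : Euc N → ℝ)
    (hmmeas : Measurable m) (hVmeas : Measurable V)
    (hm : ∀ x, 0 ≤ m x) (hM0 : 0 < M) (hM : (∫ x, m x) = M)
    (hK : K = ∫ x in {x | 0 < m x}, m x * |w x / m x| ^ γ')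
    (hKfin : IntegrableOn (fun x => m x * |w x / m x| ^ γ') {x | 0 < m x})
    (hV0 : ∀ x, 0 ≤ V x) (hVub : ∀ x, V x ≤ C_V * (1 + ‖x‖) ^ b)
    (hVmint : Integrable (fun x => (1 + ‖x‖) ^ b * m x))
    (hR : R = ∫ x, ∫ y, m x * m y * ‖x - y‖ ^ (α - (N : ℝ))) (hR0 : 0 < R) :
    Tendsto
      (fun σ : ℝ =>
        σ ^ (-γ') * K / γ' + (∫ x, V (σ • x) * m x) - σ ^ (α - (N : ℝ)) / 2 * R)
      (𝓝[>] (0 : ℝ)) atBot := by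
  -- Notation
  set P : ℝ := ∫ x, (1 + ‖x‖) ^ b * m x with hP
  have hγ0 : (0 : ℝ) < γ' := lt_trans one_pos hγ'
  -- K is nonnegative
  have hK0 : 0 ≤ K := by
    rw [hK]
    apply setIntegral_nonneg (measurableSet_lt measurable_const hmmeas)
    intro x hx
    have h1 : 0 ≤ m x := hm x
    positivity
  -- P is nonnegative
  have hP0 : 0 ≤ P := by
    apply integral_nonneg
    intro x
    have h1 : (0:ℝ) ≤ 1 + ‖x‖ := by positivity
    have := hm x
    positivity
  -- Potential term bound, uniform for 0 < σ ≤ 1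
  have hVbound : ∀ σ : ℝ, 0 < σ → σ ≤ 1 → (∫ x, V (σ • x) * m x) ≤ C_V * P := by
    intro σ hσ hσ1
    have hle : ∀ x : Euc N, V (σ • x) * m x ≤ C_V * ((1 + ‖x‖) ^ b * m x) := by
      intro x
      have h1 : V (σ • x) ≤ C_V * (1 + ‖σ • x‖) ^ b := hVub _
      have h2 : ‖σ • x‖ ≤ ‖x‖ := by
        rw [norm_smul]
        calc ‖σ‖ * ‖x‖ ≤ 1 * ‖x‖ := by
              apply mul_le_mul_of_nonneg_right _ (norm_nonneg x)
              rw [Real.norm_eq_abs, abs_of_pos hσ]; exact hσ1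
          _ = ‖x‖ := one_mul _
      have h3 : (1 + ‖σ • x‖) ^ b ≤ (1 + ‖x‖) ^ b := by
        apply Real.rpow_le_rpow (by positivity) (by linarith) hb.le
      have h4 : V (σ • x) ≤ C_V * (1 + ‖x‖) ^ b := by
        refine le_trans h1 ?_
        exact mul_le_mul_of_nonneg_left h3 hCV.le
      calc V (σ • x) * m x ≤ (C_V * (1 + ‖x‖) ^ b) * m x :=
            mul_le_mul_of_nonneg_right h4 (hm x)
        _ = C_V * ((1 + ‖x‖) ^ b * m x) := by ring
    calc (∫ x, V (σ • x) * m x)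
        ≤ ∫ x, C_V * ((1 + ‖x‖) ^ b * m x) := by
          apply integral_mono_of_nonneg
          · filter_upwards with x
            exact mul_nonneg (hV0 _) (hm x)
          · exact hVmint.const_mul C_V
          · filter_upwards with x
            exact hle x
      _ = C_V * P := by rw [integral_const_mul]
  -- exponent bookkeeping
  set e : ℝ := (N : ℝ) - α - γ' with he_def
  have he : 0 < e := by simp only [he_def]; linarith
  -- σ ^ e → 0 as σ → 0⁺
  have htend_e : Tendsto (fun σ : ℝ => σ ^ e) (𝓝[>] (0 : ℝ)) (𝓝 0) := by
    have := (Real.continuousAt_rpow_const 0 e (Or.inr he.le)).continuousWithinAt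
      (s := Set.Ioi (0 : ℝ))
    simpa [ContinuousWithinAt, Real.zero_rpow he.ne'] using this
  -- σ ^ (α - N) → atTop as σ → 0⁺
  have htend_top : Tendsto (fun σ : ℝ => σ ^ (α - (N : ℝ))) (𝓝[>] (0 : ℝ)) atTop := by
    have hp : 0 < (N : ℝ) - α := by linarith
    have h1 : Tendsto (fun σ : ℝ => σ ^ ((N : ℝ) - α)) (𝓝[>] (0 : ℝ)) (𝓝[>] 0) := by
      have h2 : Tendsto (fun σ : ℝ => σ ^ ((N : ℝ) - α)) (𝓝[>] (0 : ℝ)) (𝓝 0) := by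
        have := (Real.continuousAt_rpow_const 0 ((N : ℝ) - α)
          (Or.inr hp.le)).continuousWithinAt (s := Set.Ioi (0 : ℝ))
        simpa [ContinuousWithinAt, Real.zero_rpow hp.ne'] using this
      apply tendsto_nhdsWithin_of_tendsto_nhds_of_eventually_within _ h2
      filter_upwards [self_mem_nhdsWithin] with σ hσ
      exact Real.rpow_pos_of_pos hσ _
    have h3 := tendsto_inv_nhdsGT_zero.comp h1
    apply h3.congr'
    filter_upwards [self_mem_nhdsWithin] with σ (hσ : 0 < σ)
    have : α - (N : ℝ) = -((N : ℝ) - α) := by ring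
    rw [Function.comp_apply, this, Real.rpow_neg hσ.le]
  -- the dominating function tends to atBot
  have hg : Tendsto (fun σ : ℝ => C_V * P - σ ^ (α - (N : ℝ)) * (R / 4))
      (𝓝[>] (0 : ℝ)) atBot := by
    have h1 : Tendsto (fun σ : ℝ => σ ^ (α - (N : ℝ)) * (R / 4)) (𝓝[>] (0 : ℝ)) atTop :=
      htend_top.atTop_mul_const (by linarith)
    have h2 := tendsto_atBot_add_const_left (𝓝[>] (0:ℝ)) (C_V * P)
      (tendsto_neg_atTop_atBot.comp h1)
    apply h2.congr
    intro σ
    simp [sub_eq_add_neg]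
  -- eventual comparison
  apply tendsto_atBot_mono' _ _ hg
  have hsmall : ∀ᶠ σ in 𝓝[>] (0 : ℝ), σ ^ e * (K / γ') ≤ R / 4 := by
    have h1 : Tendsto (fun σ : ℝ => σ ^ e * (K / γ')) (𝓝[>] (0 : ℝ)) (𝓝 0) := by
      simpa using htend_e.mul_const (K / γ')
    exact h1.eventually_le_const (by linarith)
  have hIoc : ∀ᶠ σ in 𝓝[>] (0 : ℝ), σ ∈ Set.Ioc (0 : ℝ) 1 :=
    Ioc_mem_nhdsGT_of_mem (by constructor <;> norm_num)
  filter_upwards [hsmall, hIoc] with σ hσsmall hσIoc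
  obtain ⟨hσ, hσ1⟩ := hσIoc
  have hsplit : σ ^ (-γ') = σ ^ (α - (N : ℝ)) * σ ^ e := by
    rw [← Real.rpow_add hσ]
    congr 1
    simp only [he_def]; ring
  have hpow_pos : 0 < σ ^ (α - (N : ℝ)) := Real.rpow_pos_of_pos hσ _
  have hkin : σ ^ (-γ') * K / γ' ≤ σ ^ (α - (N : ℝ)) * (R / 4) := by
    rw [hsplit]
    have : σ ^ (α - (N : ℝ)) * σ ^ e * K / γ' =
        σ ^ (α - (N : ℝ)) * (σ ^ e * (K / γ')) := by ring
    rw [this]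
    exact mul_le_mul_of_nonneg_left hσsmall hpow_pos.le
  have hVb := hVbound σ hσ hσ1
  have : σ ^ (α - (N : ℝ)) * (R / 4) - σ ^ (α - (N : ℝ)) / 2 * R =
      -(σ ^ (α - (N : ℝ)) * (R / 4)) := by ring
  linarith
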